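/- Let F: D^b(A) → D^b(A') be a triangulated functor induced by an exact-functor-induced map on complexes satisfying App1 and App2ᵒᵖ. Then F is full: every morphism FX → FX' in D^b(A') represented by a fraction FX ← Y → FX' is the image of a morphism X → X' in D^b(A). -/
import Mathlib


open CategoryTheory CategoryTheory.Limits

universe v u v' u'

variable {A : Type u} [Category.{v} A] [Abelian A]
variable {A' : Type u'} [Category.{v'} A'] [Abelian A']
variable (φ : A ⥤ A') [φ.Additive]

/-- The functor on bounded cochain complexes induced by the exact functor `φ`. -/
noncomputable abbrev inducedF :
    CochainComplex A ℤ ⥤ CochainComplex A' ℤ :=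
  φ.mapHomologicalComplex (ComplexShape.up ℤ)

/-- A cochain complex is bounded if it vanishes outside finitely many degrees. -/
def IsBounded {C : Type*} [Category C] [Preadditive C]
    (K : CochainComplex C ℤ) : Prop :=
  ∃ a b : ℤ, ∀ n : ℤ, (n < a ∨ b < n) → IsZero (K.X n)

/-- if the induced functor on complexes satisfies `App1` and the
dual approximation property `App2ᵒᵖ`, then the induced triangulated functor
`D^b(A) → D^b(A')` is full: every morphism `FX → FX'` represented by a
fraction `FX ⟵ˢ Y ⟶ᶠ FX'` (with `s` a quasi-isomorphism) is the image of a
morphism `X → X'` of `D^b(A)`, i.e. there are `u : Z ⟶ X`, `v : Z ⟶ X'` with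
`u` a quasi-isomorphism such that the fractions `(F u, F v)` and `(s, f)` are
equivalent via a common denominator (up to homotopy). -/
theorem induced_derived_functor_full
    (hApp1 : ∀ {X Y : CochainComplex A ℤ} (f : X ⟶ Y),
      QuasiIso f ↔ QuasiIso ((inducedF φ).map f))
    (hApp2op : ∀ (X : CochainComplex A ℤ) (Y : CochainComplex A' ℤ)
      (f : Y ⟶ (inducedF φ).obj X),
      ∃ (X' : CochainComplex A ℤ) (g : X' ⟶ X) (Y' : CochainComplex A' ℤ)
        (s : Y' ⟶ Y) (t : Y' ⟶ (inducedF φ).obj X'),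
        QuasiIso s ∧ QuasiIso t ∧ s ≫ f = t ≫ (inducedF φ).map g)
    (X X' : CochainComplex A ℤ) (hX : IsBounded X) (hX' : IsBounded X')
    (Y : CochainComplex A' ℤ) (s : Y ⟶ (inducedF φ).obj X)
    (f : Y ⟶ (inducedF φ).obj X') (hs : QuasiIso s) :
    ∃ (Z : CochainComplex A ℤ) (u : Z ⟶ X) (v : Z ⟶ X'), QuasiIso u ∧
      ∃ (W : CochainComplex A' ℤ) (a : W ⟶ Y) (b : W ⟶ (inducedF φ).obj Z),
        QuasiIso a ∧ QuasiIso b ∧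
        Nonempty (Homotopy (a ≫ s) (b ≫ (inducedF φ).map u)) ∧
        Nonempty (Homotopy (a ≫ f) (b ≫ (inducedF φ).map v)) := by
  let F := inducedF φ
  let g : Y ⟶ F.obj (X ⊞ X') := s ≫ F.map biprod.inl + f ≫ F.map biprod.inr
  obtain ⟨Z, w, W, a, t, ha, ht, hcomm⟩ := hApp2op (X ⊞ X') Y g
  have h1 : a ≫ s = t ≫ F.map (w ≫ biprod.fst) := by
    have := congrArg (fun x => x ≫ F.map biprod.fst) hcomm
    simpa [g, F, Preadditive.add_comp, ← Functor.map_comp] using this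
  have h2 : a ≫ f = t ≫ F.map (w ≫ biprod.snd) := by
    have := congrArg (fun x => x ≫ F.map biprod.snd) hcomm
    simpa [g, F, Preadditive.add_comp, ← Functor.map_comp] using this
  refine ⟨Z, w ≫ biprod.fst, w ≫ biprod.snd, ?_, W, a, t, ha, ht,
    ⟨Homotopy.ofEq h1⟩, ⟨Homotopy.ofEq h2⟩⟩
  have hq : QuasiIso (t ≫ F.map (w ≫ biprod.fst)) := by
    rw [← h1]; infer_instance
  have : QuasiIso (F.map (w ≫ biprod.fst)) := quasiIso_of_comp_left t _
  exact (hApp1 _).2 this
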